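/- Let q be a power of an odd prime, let n > 3 be odd with gcd(n, q - 1) = 1, let δ ∈ F_{q^n}^* with δ ≠ 1 and δ^{q-1} = 1, and let r be a positive integer with r < n and gcd(r, n) = 1. Then the polynomial S(x) = x^q + δx^{q^{2r+1}} is exceptional scattered of index r + 1: there exist infinitely many positive integers m such that the map x ↦ x^q + δx^{q^{2r+1}} on F_{q^{mn}} is scattered of index r + 1, i.e., for all nonzero y, z ∈ F_{q^{mn}}, S(y)·z^{q^{r+1}} = S(z)·y^{q^{r+1}} implies y/z ∈ F_q. -/

import Mathlib

/-- Let q be a power of an odd prime, n > 3 odd with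
gcd(n, q - 1) = 1, δ ∈ F_{q^n}^* with δ ≠ 1 and δ^{q-1} = 1, and r a positive
integer with r < n and gcd(r, n) = 1.  Then S(x) = x^q + δx^{q^{2r+1}} is
exceptional scattered of index r + 1: there exist infinitely many positive
integers m such that the map x ↦ x^q + δx^{q^{2r+1}} on F_{q^{mn}} is scattered
of index r + 1, i.e., for all nonzero y, z ∈ F_{q^{mn}},
S(y)·z^{q^{r+1}} = S(z)·y^{q^{r+1}} implies y/z ∈ F_q.

Here F_{q^{mn}} is represented by an arbitrary field M of cardinality q^{m·n}
together with an embedding φ : F_{q^n} →+* M (which exists since n ∣ m·n), so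
that δ is regarded as the element φ(δ) of F_{q^{mn}}; membership of y/z in the
subfield F_q of M is expressed via its characterization as the fixed field of
the q-power Frobenius: (y/z)^q = y/z. -/
theorem stmt16 (q n r : ℕ)
    (hq : ∃ p m : ℕ, p.Prime ∧ Odd p ∧ 0 < m ∧ q = p ^ m)
    (hn : 3 < n) (hodd : Odd n) (hgcdqn : Nat.gcd n (q - 1) = 1)
    (hr : 0 < r) (hrn : r < n) (hgcdrn : Nat.gcd r n = 1)
    (L : Type) [Field L] [Fintype L] (hcard : Fintype.card L = q ^ n)
    (δ : L) (hδ0 : δ ≠ 0) (hδ1 : δ ≠ 1) (hδord : δ ^ (q - 1) = 1) :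
    {m : ℕ | 0 < m ∧
      ∀ (M : Type) (_ : Field M) (_ : Fintype M), Fintype.card M = q ^ (m * n) →
        ∀ φ : L →+* M, ∀ y z : M, y ≠ 0 → z ≠ 0 →
          (y ^ q + φ δ * y ^ q ^ (2 * r + 1)) * z ^ q ^ (r + 1)
            = (z ^ q + φ δ * z ^ q ^ (2 * r + 1)) * y ^ q ^ (r + 1) →
          (y / z) ^ q = y / z}.Infinite := by
  obtain ⟨p, e, hp, hpodd, he, hqe⟩ := hq
  haveI hpF : Fact p.Prime := ⟨hp⟩
  have hq2 : 2 ≤ q := by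
    have h1 : 2 ≤ p := hp.two_le
    have h2 : p ≤ p ^ e := Nat.le_self_pow (by omega) p
    omega
  -- δ is fixed by the q-power map
  have hδq : δ ^ q = δ := by
    have hq1 : q - 1 + 1 = q := by omega
    calc δ ^ q = δ ^ (q - 1) * δ := by rw [← pow_succ, hq1]
    _ = δ := by rw [hδord, one_mul]
  apply Set.infinite_of_injective_forall_mem (f := fun k : ℕ => n ^ (k + 1))
  · -- injectivity of k ↦ n^(k+1)
    intro a b hab
    have := Nat.pow_right_injective (by omega : 2 ≤ n) hab
    omega
  intro k
  simp only [Set.mem_setOf_eq]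
  refine ⟨Nat.pow_pos (by omega), ?_⟩
  intro M _ _ hcardM φ y z hy hz H
  set N : ℕ := n ^ (k + 1) * n with hNdef
  have hNpow : N = n ^ (k + 2) := by rw [hNdef]; ring
  have hNpos : 0 < N := by
    rw [hNpow]; exact Nat.pow_pos (by omega)
  have hN1 : 1 < N := by
    rw [hNpow]
    calc 1 < n := by omega
    _ ≤ n ^ (k + 2) := Nat.le_self_pow (by omega) n
  have hrN : Nat.Coprime r N := by
    rw [hNpow]; exact (Nat.Coprime.pow_right _ hgcdrn)
  have hNq1 : Nat.Coprime N (q - 1) := by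
    rw [hNpow]; exact (Nat.Coprime.pow_left _ hgcdqn)
  -- characteristic of M is p
  have hcharM : CharP M p := by
    have hchar : CharP M (ringChar M) := ringChar.charP M
    have hprime : (ringChar M).Prime := CharP.char_is_prime M (ringChar M)
    obtain ⟨a, _, hMa⟩ := FiniteField.card M (ringChar M)
    have hdvd : ringChar M ∣ q ^ N := by
      rw [← hcardM, hMa]
      exact dvd_pow_self _ (by exact_mod_cast a.pos.ne')
    have hdvdq : ringChar M ∣ q := hprime.dvd_of_dvd_pow hdvd
    have hdvdp : ringChar M ∣ p := by
      rw [hqe] at hdvdq; exact hprime.dvd_of_dvd_pow hdvdq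
    have heq : ringChar M = p := (Nat.prime_dvd_prime_iff_eq hprime hp).mp hdvdp
    exact heq ▸ hchar
  haveI := hcharM
  -- Frobenius powers are additive
  have hsub : ∀ (a b : M) (j : ℕ), (a - b) ^ q ^ j = a ^ q ^ j - b ^ q ^ j := by
    intro a b j
    have hqj : q ^ j = p ^ (e * j) := by rw [hqe, ← pow_mul]
    rw [hqj]
    exact sub_pow_char_pow a b (e * j)
  -- φ δ is fixed by all q-power maps
  have hd : (φ δ) ^ q = φ δ := by rw [← map_pow, hδq]
  have hdk : ∀ j : ℕ, (φ δ) ^ q ^ j = φ δ := by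
    intro j
    induction j with
    | zero => simp
    | succ j ih => rw [pow_succ, pow_mul, ih, hd]
  -- the key element w
  set w : M := y ^ q * z ^ q ^ (r + 1) - z ^ q * y ^ q ^ (r + 1) with hwdef
  have e1 : q * q ^ r = q ^ (r + 1) := by rw [← pow_succ']
  have e2 : q ^ (r + 1) * q ^ r = q ^ (2 * r + 1) := by
    rw [← pow_add]; congr 1; ring
  have hwfrob : w ^ q ^ r
      = y ^ q ^ (r + 1) * z ^ q ^ (2 * r + 1)
        - z ^ q ^ (r + 1) * y ^ q ^ (2 * r + 1) := by
    rw [hwdef, hsub, mul_pow, mul_pow, ← pow_mul, ← pow_mul, ← pow_mul, ← pow_mul,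
      e1, e2]
  have hw : w = φ δ * w ^ q ^ r := by
    rw [hwfrob, hwdef]
    linear_combination H
  have hchain : ∀ j : ℕ, w = (φ δ) ^ j * w ^ q ^ (r * j) := by
    intro j
    induction j with
    | zero => simp
    | succ j ih =>
      have hstep : w ^ q ^ (r * j) = φ δ * w ^ q ^ (r * (j + 1)) := by
        conv_lhs => rw [hw]
        rw [mul_pow, hdk, ← pow_mul, ← pow_add]
        congr 2
        ring
      calc w = (φ δ) ^ j * w ^ q ^ (r * j) := ih
      _ = (φ δ) ^ j * (φ δ * w ^ q ^ (r * (j + 1))) := by rw [hstep]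
      _ = (φ δ) ^ (j + 1) * w ^ q ^ (r * (j + 1)) := by ring
  have hcardpow : ∀ (a : M) (c : ℕ), a ^ (q ^ N) ^ c = a := by
    intro a c
    rw [← hcardM]
    exact FiniteField.pow_card_pow c a
  by_cases hwz : w = 0
  · -- w = 0 : then (y/z)^{q^r} = y/z, and by gcd(r,N)=1 we get (y/z)^q = y/z
    have hyz : y ^ q * z ^ q ^ (r + 1) = z ^ q * y ^ q ^ (r + 1) := by
      have := sub_eq_zero.mp (hwdef ▸ hwz)
      exact this
    have hinj : Function.Injective (fun x : M => x ^ q) := by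
      intro a b hab
      have h0 : (a - b) ^ q ^ 1 = a ^ q ^ 1 - b ^ q ^ 1 := hsub a b 1
      rw [pow_one] at h0
      have hab' : a ^ q = b ^ q := hab
      have : (a - b) ^ q = 0 := by rw [h0, hab', sub_self]
      exact sub_eq_zero.mp (pow_eq_zero_iff (by omega : q ≠ 0) |>.mp this)
    have hyz2 : y * z ^ q ^ r = z * y ^ q ^ r := by
      apply hinj
      simp only [mul_pow, ← pow_mul, e1]
      exact hyz
    have hu : (y / z) ^ q ^ r = y / z := by
      rw [div_pow, div_eq_div_iff (pow_ne_zero _ hz) hz]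
      linear_combination -hyz2
    have hukey : ∀ j : ℕ, (y / z) ^ q ^ (r * j) = y / z := by
      intro j
      induction j with
      | zero => simp
      | succ j ih =>
        have : q ^ (r * (j + 1)) = q ^ (r * j) * q ^ r := by
          rw [Nat.mul_succ, pow_add]
        rw [this, pow_mul, ih, hu]
    -- Bézout via Euler's theorem
    have hφpos : 0 < Nat.totient N := Nat.totient_pos.mpr hNpos
    have htot : r ^ Nat.totient N ≡ 1 [MOD N] := Nat.ModEq.pow_totient hrN
    have hmod : r ^ Nat.totient N % N = 1 := by
      have := htot
      unfold Nat.ModEq at this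
      rwa [Nat.one_mod_eq_one.mpr (by omega)] at this
    obtain ⟨c, hc⟩ : ∃ c, r ^ Nat.totient N = N * c + 1 :=
      ⟨r ^ Nat.totient N / N, by
        have h2 := Nat.div_add_mod (r ^ Nat.totient N) N
        omega⟩
    have hrj : r * r ^ (Nat.totient N - 1) = N * c + 1 := by
      rw [← hc, ← pow_succ']
      congr 1
      omega
    have hfinal := hukey (r ^ (Nat.totient N - 1))
    rw [hrj] at hfinal
    have hexp : q ^ (N * c + 1) = (q ^ N) ^ c * q := by
      rw [pow_succ, pow_mul]
    rw [hexp, pow_mul, hcardpow] at hfinal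
    exact hfinal
  · -- w ≠ 0 : contradiction with δ ≠ 1
    exfalso
    have hN := hchain N
    have hwN : w ^ q ^ (r * N) = w := by
      have : q ^ (r * N) = (q ^ N) ^ r := by rw [← pow_mul, mul_comm]
      rw [this, hcardpow]
    rw [hwN] at hN
    have hdN : (φ δ) ^ N = 1 :=
      mul_right_cancel₀ hwz (by rw [one_mul, ← hN])
    have hδN : δ ^ N = 1 := by
      apply φ.injective
      rw [map_pow, map_one]
      exact hdN
    have h1 : orderOf δ ∣ N := orderOf_dvd_of_pow_eq_one hδN
    have h2 : orderOf δ ∣ q - 1 := orderOf_dvd_of_pow_eq_one hδord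
    have h3 : orderOf δ ∣ Nat.gcd N (q - 1) := Nat.dvd_gcd h1 h2
    rw [hNq1] at h3
    exact hδ1 (orderOf_eq_one_iff.mp (Nat.eq_one_of_dvd_one h3))
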